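/- Let m be a positive even integer, let β ≠ 0 and τ be real numbers, let 1 < α ≤ 2, let a < b be real numbers, and set μ_k = 2πk/(b − a). Let θ, θ′ : {0,…,m−1} → ℝ be arbitrary real phase functions. Given ψ : {0,…,m−1} → ℂ, define the Strang-split step: ψ*_j = exp(i·θ_j)·ψ_j; ψ̂*_k = Σ_{j=0}^{m−1} ψ*_j · exp(−2πi·k·j/m) for k = −m/2,…,m/2−1; ψ**_j = (1/m) · Σ_{k=−m/2}^{m/2−1} exp(−(i/β)·|μ_k|^α·τ) · ψ̂*_k · exp(2πi·k·j/m); and ψ^{new}_j = exp(i·θ′_j)·ψ**_j. Then Σ_{j=0}^{m−1} |ψ^{new}_j|² = Σ_{j=0}^{m−1} |ψ_j|². -/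

import Mathlib

lemma core_exp_sum (m : ℕ) (hm : 0 < m) (d : ℤ) (hdm : d.natAbs < m) :
    ∑ j ∈ Finset.range m, Complex.exp (2 * Real.pi * Complex.I * d * j / m)
      = if d = 0 then (m : ℂ) else 0 := by
  have hm0 : (m : ℂ) ≠ 0 := Nat.cast_ne_zero.mpr hm.ne'
  by_cases hd : d = 0
  · simp [hd]
  · rw [if_neg hd]
    set x : ℂ := Complex.exp (2 * Real.pi * Complex.I * d / m) with hx
    have hterm : ∀ j ∈ Finset.range m,
        Complex.exp (2 * Real.pi * Complex.I * d * j / m) = x ^ j := by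
      intro j _
      rw [hx, ← Complex.exp_nat_mul]
      congr 1
      ring
    rw [Finset.sum_congr rfl hterm]
    have hpi : (2 * Real.pi * Complex.I : ℂ) ≠ 0 := by
      simp [Real.pi_ne_zero, Complex.I_ne_zero, Complex.ofReal_ne_zero]
    have hx1 : x ≠ 1 := by
      intro h
      rw [hx, Complex.exp_eq_one_iff] at h
      obtain ⟨n, hn⟩ := h
      have hdc : (d : ℂ) = n * m := by
        field_simp at hn
        have h2 : (2 * Real.pi * Complex.I) * (d : ℂ) = (2 * Real.pi * Complex.I) * ((n : ℂ) * m) := by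
          rw [mul_comm] at hn
          linear_combination (2 * Real.pi * Complex.I) * hn
        exact mul_left_cancel₀ hpi h2
      have hdn : d = n * m := by exact_mod_cast hdc
      have hn0 : n ≠ 0 := by rintro rfl; simp at hdn; exact hd hdn
      have : m ≤ d.natAbs := by
        rw [hdn, Int.natAbs_mul]
        calc m = 1 * m := (one_mul m).symm
        _ ≤ n.natAbs * (m:ℤ).natAbs := by
              apply Nat.mul_le_mul
              · omega
              · simp
      omega
    rw [geom_sum_eq hx1]
    have hxm : x ^ m = 1 := by
      rw [hx, ← Complex.exp_nat_mul]
      have harg : (m:ℂ) * (2 * Real.pi * Complex.I * d / m) = d * (2 * Real.pi * Complex.I) := by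
        field_simp
      rw [harg, Complex.exp_int_mul_two_pi_mul_I]
    rw [hxm]
    simp

lemma core_exp_sum_Icc (m : ℕ) (hm : 0 < m) (hme : Even m) (d : ℤ) (hdm : d.natAbs < m) :
    ∑ k ∈ Finset.Icc (-(m:ℤ)/2) ((m:ℤ)/2 - 1),
        Complex.exp (2 * Real.pi * Complex.I * k * d / m)
      = if d = 0 then (m : ℂ) else 0 := by
  have h2 : (2 : ℤ) ∣ (m : ℤ) := by
    obtain ⟨r, hr⟩ := hme; exact ⟨r, by omega⟩
  have hinj : Function.Injective (fun t : ℕ => (t : ℤ) - (m:ℤ)/2) := by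
    intro x y h; simpa using h
  have hIcc : Finset.Icc (-(m:ℤ)/2) ((m:ℤ)/2 - 1)
      = Finset.image (fun t : ℕ => (t : ℤ) - (m:ℤ)/2) (Finset.range m) := by
    ext k
    simp only [Finset.mem_Icc, Finset.mem_image, Finset.mem_range]
    constructor
    · rintro ⟨h1, h2'⟩
      exact ⟨(k + (m:ℤ)/2).toNat, by omega, by omega⟩
    · rintro ⟨t, ht, rfl⟩; omega
  rw [hIcc, Finset.sum_image (fun x _ y _ h => hinj h)]
  by_cases hd : d = 0
  · simp [hd, Finset.card_range]
  · rw [if_neg hd]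
    have hterm : ∀ t ∈ Finset.range m,
        Complex.exp (2 * Real.pi * Complex.I * ((t : ℤ) - (m:ℤ)/2 : ℤ) * d / m)
          = Complex.exp (2 * Real.pi * Complex.I * d * t / m) *
            Complex.exp (-(2 * Real.pi * Complex.I * ((m:ℤ)/2 : ℤ) * d / m)) := by
      intro t _
      rw [← Complex.exp_add]
      congr 1
      push_cast
      ring
    rw [Finset.sum_congr rfl hterm, ← Finset.sum_mul, core_exp_sum m hm d hdm, if_neg hd,
      zero_mul]

lemma l2_orth {ι κ : Type*} [DecidableEq ι] (K : Finset ι) (J : Finset κ)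
    (A : ι → ℂ) (E : ι → κ → ℂ) (c : ℂ)
    (horth : ∀ k ∈ K, ∀ k' ∈ K,
      ∑ j ∈ J, E k j * (starRingEnd ℂ) (E k' j) = if k = k' then c else 0) :
    ∑ j ∈ J, (∑ k ∈ K, A k * E k j) * (starRingEnd ℂ) (∑ k ∈ K, A k * E k j)
      = c * ∑ k ∈ K, A k * (starRingEnd ℂ) (A k) := by
  have step1 : ∀ j ∈ J,
      (∑ k ∈ K, A k * E k j) * (starRingEnd ℂ) (∑ k ∈ K, A k * E k j)
        = ∑ k ∈ K, ∑ k' ∈ K,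
            (A k * (starRingEnd ℂ) (A k')) * (E k j * (starRingEnd ℂ) (E k' j)) := by
    intro j _
    rw [map_sum, Finset.sum_mul_sum]
    refine Finset.sum_congr rfl fun k _ => Finset.sum_congr rfl fun k' _ => ?_
    rw [map_mul]; ring
  rw [Finset.sum_congr rfl step1, Finset.sum_comm]
  have step2 : ∀ k ∈ K,
      ∑ j ∈ J, ∑ k' ∈ K,
          (A k * (starRingEnd ℂ) (A k')) * (E k j * (starRingEnd ℂ) (E k' j))
        = A k * (starRingEnd ℂ) (A k) * c := by
    intro k hk
    rw [Finset.sum_comm]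
    have inner : ∀ k' ∈ K,
        ∑ j ∈ J, (A k * (starRingEnd ℂ) (A k')) * (E k j * (starRingEnd ℂ) (E k' j))
          = (A k * (starRingEnd ℂ) (A k')) * (if k = k' then c else 0) := by
      intro k' hk'
      rw [← Finset.mul_sum, horth k hk k' hk']
    rw [Finset.sum_congr rfl inner]
    simp only [mul_ite, mul_zero]
    rw [Finset.sum_ite_eq K k (fun k' => A k * (starRingEnd ℂ) (A k') * c), if_pos hk]
  rw [Finset.sum_congr rfl step2, ← Finset.sum_mul]
  ring

/-- **ℓ²-conservation of one Strang-split TSFS step (case η = 0, β ≠ 0).**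
The nonlinear half-steps are modeled by arbitrary real phases `θ, θ'`, and the linear
step multiplies Fourier mode `k` by `exp(−(i/β)·|μ_k|^α·τ)` with `μ_k = 2πk/(b−a)`.
One step of the scheme conserves the discrete ℓ²-norm. -/
theorem tsfs_strang_step_l2_conservative
    (m : ℕ) (hm : 0 < m) (hme : Even m)
    (β τ α a b : ℝ) (hβ : β ≠ 0) (hα1 : 1 < α) (hα2 : α ≤ 2) (hab : a < b)
    (μ : ℤ → ℝ) (hμ : ∀ k : ℤ, μ k = 2 * Real.pi * (k : ℝ) / (b - a))
    (θ θ' : ℕ → ℝ) (ψ ψstar ψss ψnew : ℕ → ℂ) (ψhatstar : ℤ → ℂ)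
    (hstar : ∀ j : ℕ, ψstar j = Complex.exp (Complex.I * (θ j : ℂ)) * ψ j)
    (hhatstar : ∀ k : ℤ, ψhatstar k =
      ∑ j ∈ Finset.range m, ψstar j *
        Complex.exp (-(2 * (Real.pi : ℂ) * Complex.I * (k : ℂ) * (j : ℂ)) / (m : ℂ)))
    (hss : ∀ j : ℕ, ψss j = (1 / (m : ℂ)) *
      ∑ k ∈ Finset.Icc (-(m : ℤ) / 2) ((m : ℤ) / 2 - 1),
        Complex.exp (-((Complex.I / (β : ℂ)) * ((|μ k| ^ α : ℝ) : ℂ) * (τ : ℂ))) *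
          ψhatstar k * Complex.exp (2 * (Real.pi : ℂ) * Complex.I * (k : ℂ) * (j : ℂ) / (m : ℂ)))
    (hnew : ∀ j : ℕ, ψnew j = Complex.exp (Complex.I * (θ' j : ℂ)) * ψss j) :
    ∑ j ∈ Finset.range m, ‖ψnew j‖ ^ 2
      = ∑ j ∈ Finset.range m, ‖ψ j‖ ^ 2 := by
  have hm0 : (m : ℂ) ≠ 0 := Nat.cast_ne_zero.mpr hm.ne'
  have h2 : (2 : ℤ) ∣ (m : ℤ) := by
    obtain ⟨r, hr⟩ := hme; exact ⟨r, by omega⟩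
  set K : Finset ℤ := Finset.Icc (-(m : ℤ) / 2) ((m : ℤ) / 2 - 1) with hK
  set E : ℤ → ℕ → ℂ :=
    fun k j => Complex.exp (2 * (Real.pi : ℂ) * Complex.I * (k : ℂ) * (j : ℂ) / (m : ℂ)) with hE
  set c : ℤ → ℂ :=
    fun k => Complex.exp (-((Complex.I / (β : ℂ)) * ((|μ k| ^ α : ℝ) : ℂ) * (τ : ℂ))) with hc
  set A : ℤ → ℂ := fun k => c k * ψhatstar k with hA
  -- conjugate of E
  have hconjE : ∀ (k : ℤ) (j : ℕ), (starRingEnd ℂ) (E k j)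
      = Complex.exp (-(2 * (Real.pi : ℂ) * Complex.I * (k : ℂ) * (j : ℂ)) / (m : ℂ)) := by
    intro k j
    rw [hE, ← Complex.exp_conj]
    congr 1
    simp only [map_div₀, map_mul, Complex.conj_I, Complex.conj_ofReal,
      Complex.conj_natCast, map_intCast, map_ofNat]
    ring
  -- orthogonality in j
  have horthJ : ∀ k ∈ K, ∀ k' ∈ K,
      ∑ j ∈ Finset.range m, E k j * (starRingEnd ℂ) (E k' j)
        = if k = k' then (m : ℂ) else 0 := by
    intro k hk k' hk'
    rw [hK, Finset.mem_Icc] at hk hk'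
    have hterm : ∀ j ∈ Finset.range m, E k j * (starRingEnd ℂ) (E k' j)
        = Complex.exp (2 * Real.pi * Complex.I * ((k - k' : ℤ) : ℂ) * (j : ℂ) / m) := by
      intro j _
      rw [hconjE, hE, ← Complex.exp_add]
      congr 1
      push_cast
      ring
    rw [Finset.sum_congr rfl hterm]
    have hd : (k - k').natAbs < m := by omega
    rw [core_exp_sum m hm (k - k') hd]
    simp [sub_eq_zero]
  -- orthogonality in k
  have horthK : ∀ j ∈ Finset.range m, ∀ j' ∈ Finset.range m,
      ∑ k ∈ K, (starRingEnd ℂ) (E k j) * (starRingEnd ℂ) ((starRingEnd ℂ) (E k j'))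
        = if j = j' then (m : ℂ) else 0 := by
    intro j hj j' hj'
    rw [Finset.mem_range] at hj hj'
    have hterm : ∀ k ∈ K, (starRingEnd ℂ) (E k j) * (starRingEnd ℂ) ((starRingEnd ℂ) (E k j'))
        = Complex.exp (2 * Real.pi * Complex.I * (k : ℂ) * (((j' : ℤ) - (j : ℤ) : ℤ) : ℂ) / m) := by
      intro k _
      rw [Complex.conj_conj, hconjE, hE, ← Complex.exp_add]
      congr 1
      push_cast
      ring
    rw [Finset.sum_congr rfl hterm, hK]
    have hd : ((j' : ℤ) - (j : ℤ)).natAbs < m := by omega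
    rw [core_exp_sum_Icc m hm hme ((j' : ℤ) - (j : ℤ)) hd]
    have : ((j' : ℤ) - (j : ℤ) = 0) ↔ (j = j') := by omega
    simp [this]
  -- |c k| = 1
  have hcc : ∀ k : ℤ, c k * (starRingEnd ℂ) (c k) = 1 := by
    intro k
    rw [hc, ← Complex.exp_conj, ← Complex.exp_add]
    have : -(Complex.I / (β : ℂ) * ((|μ k| ^ α : ℝ) : ℂ) * (τ : ℂ))
        + (starRingEnd ℂ) (-(Complex.I / (β : ℂ) * ((|μ k| ^ α : ℝ) : ℂ) * (τ : ℂ))) = 0 := by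
      simp only [map_neg, map_mul, map_div₀, Complex.conj_I, Complex.conj_ofReal]
      ring
    rw [this, Complex.exp_zero]
  -- the key complex identity
  have key : ∑ j ∈ Finset.range m, ψss j * (starRingEnd ℂ) (ψss j)
      = ∑ j ∈ Finset.range m, ψstar j * (starRingEnd ℂ) (ψstar j) := by
    have e1 : ∑ j ∈ Finset.range m, ψss j * (starRingEnd ℂ) (ψss j)
        = (1 / (m : ℂ)) * (1 / (m : ℂ)) *
            ∑ j ∈ Finset.range m,
              (∑ k ∈ K, A k * E k j) * (starRingEnd ℂ) (∑ k ∈ K, A k * E k j) := by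
      rw [Finset.mul_sum]
      refine Finset.sum_congr rfl fun j _ => ?_
      have hform : ψss j = (1 / (m : ℂ)) * ∑ k ∈ K, A k * E k j := hss j
      rw [hform, map_mul]
      have : (starRingEnd ℂ) (1 / (m : ℂ)) = 1 / (m : ℂ) := by
        simp
      rw [this]
      ring
    rw [e1, l2_orth K (Finset.range m) A E (m : ℂ) horthJ]
    have e2 : ∑ k ∈ K, A k * (starRingEnd ℂ) (A k)
        = ∑ k ∈ K, ψhatstar k * (starRingEnd ℂ) (ψhatstar k) := by
      refine Finset.sum_congr rfl fun k _ => ?_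
      rw [hA]
      simp only [map_mul]
      calc c k * ψhatstar k * ((starRingEnd ℂ) (c k) * (starRingEnd ℂ) (ψhatstar k))
          = (c k * (starRingEnd ℂ) (c k)) * (ψhatstar k * (starRingEnd ℂ) (ψhatstar k)) := by ring
        _ = ψhatstar k * (starRingEnd ℂ) (ψhatstar k) := by rw [hcc k, one_mul]
    have e3 : ∑ k ∈ K, ψhatstar k * (starRingEnd ℂ) (ψhatstar k)
        = (m : ℂ) * ∑ j ∈ Finset.range m, ψstar j * (starRingEnd ℂ) (ψstar j) := by
      have hform : ∀ k ∈ K, ψhatstar k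
          = ∑ j ∈ Finset.range m, ψstar j * (fun (j : ℕ) (k : ℤ) => (starRingEnd ℂ) (E k j)) j k := by
        intro k _
        rw [hhatstar k]
        refine Finset.sum_congr rfl fun j _ => ?_
        simp only [hconjE]
      calc ∑ k ∈ K, ψhatstar k * (starRingEnd ℂ) (ψhatstar k)
          = ∑ k ∈ K, (∑ j ∈ Finset.range m, ψstar j *
                (fun (j : ℕ) (k : ℤ) => (starRingEnd ℂ) (E k j)) j k) *
              (starRingEnd ℂ) (∑ j ∈ Finset.range m, ψstar j *
                (fun (j : ℕ) (k : ℤ) => (starRingEnd ℂ) (E k j)) j k) := by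
            refine Finset.sum_congr rfl fun k hk => ?_
            rw [hform k hk]
        _ = (m : ℂ) * ∑ j ∈ Finset.range m, ψstar j * (starRingEnd ℂ) (ψstar j) :=
            l2_orth (Finset.range m) K ψstar
              (fun (j : ℕ) (k : ℤ) => (starRingEnd ℂ) (E k j)) (m : ℂ) horthK
    rw [e2, e3]
    field_simp
  -- transfer to absolute values
  have habs_ss : ∑ j ∈ Finset.range m, ‖ψss j‖ ^ 2
      = ∑ j ∈ Finset.range m, ‖ψstar j‖ ^ 2 := by
    have hcast : ((∑ j ∈ Finset.range m, ‖ψss j‖ ^ 2 : ℝ) : ℂ)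
        = ((∑ j ∈ Finset.range m, ‖ψstar j‖ ^ 2 : ℝ) : ℂ) := by
      push_cast
      calc ∑ j ∈ Finset.range m, ((‖ψss j‖ : ℂ)) ^ 2
          = ∑ j ∈ Finset.range m, ψss j * (starRingEnd ℂ) (ψss j) := by
            refine Finset.sum_congr rfl fun j _ => ?_
            rw [← Complex.ofReal_pow, Complex.sq_norm, Complex.mul_conj]
        _ = ∑ j ∈ Finset.range m, ψstar j * (starRingEnd ℂ) (ψstar j) := key
        _ = ∑ j ∈ Finset.range m, ((‖ψstar j‖ : ℂ)) ^ 2 := by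
            refine Finset.sum_congr rfl fun j _ => ?_
            rw [← Complex.ofReal_pow, Complex.sq_norm, Complex.mul_conj]
    exact_mod_cast hcast
  calc ∑ j ∈ Finset.range m, ‖ψnew j‖ ^ 2
      = ∑ j ∈ Finset.range m, ‖ψss j‖ ^ 2 := by
        refine Finset.sum_congr rfl fun j _ => ?_
        rw [hnew j, norm_mul, Complex.norm_exp]
        simp
    _ = ∑ j ∈ Finset.range m, ‖ψstar j‖ ^ 2 := habs_ss
    _ = ∑ j ∈ Finset.range m, ‖ψ j‖ ^ 2 := by
        refine Finset.sum_congr rfl fun j _ => ?_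
        rw [hstar j, norm_mul, Complex.norm_exp]
        simp
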